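/- Let ρ be holomorphic near 0 in ℂ² with ρ₀₀ = ρ₁₀ = ρ₀₁ = ρ₂₀ = ρ₁₁ = 0 and ρ₀₂ ≠ 0, and let τ be holomorphic near 0 with τ(0,0) ≠ 0. If 𝒜₃^ρ = ρ₃₀ = 0, then 𝒜₄^{τρ} = τ(0,0)·𝒜₄^ρ, where 𝒜₄^g := g₄₀ − 3g₂₁²/g₀₂ for any such g. In particular 𝒜₄^{τρ} = 0 iff 𝒜₄^ρ = 0. -/

import Mathlib

/-!
STATEMENT 5: Let ρ be holomorphic near 0 in ℂ² with ρ₀₀ = ρ₁₀ = ρ₀₁ = ρ₂₀ = ρ₁₁ = 0 and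
ρ₀₂ ≠ 0, and τ holomorphic near 0 with τ(0,0) ≠ 0.  If 𝒜₃^ρ = ρ₃₀ = 0, then
𝒜₄^{τρ} = τ(0,0)·𝒜₄^ρ, where 𝒜₄^g := g₄₀ − 3g₂₁²/g₀₂.  In particular
𝒜₄^{τρ} = 0 ↔ 𝒜₄^ρ = 0.
-/

open Filter Topology Finset


lemma AnalyticAt.deriv1 {f : ℂ → ℂ} {x : ℂ} (h : AnalyticAt ℂ f x) :
    AnalyticAt ℂ (deriv f) x := by
  obtain ⟨s, hs, hf⟩ := h.exists_mem_nhds_analyticOnNhd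
  exact hf.deriv x (mem_of_mem_nhds hs)

lemma iteratedDeriv_add_aa (n : ℕ) : ∀ (f g : ℂ → ℂ) (x : ℂ), AnalyticAt ℂ f x →
    AnalyticAt ℂ g x →
    iteratedDeriv n (fun t => f t + g t) x = iteratedDeriv n f x + iteratedDeriv n g x := by
  induction n with
  | zero => intro f g x _ _; simp
  | succ n ih =>
    intro f g x hf hg
    have key : deriv (fun t => f t + g t) =ᶠ[𝓝 x] fun t => deriv f t + deriv g t := by
      filter_upwards [hf.eventually_analyticAt, hg.eventually_analyticAt] with y hfy hgy
      exact deriv_add hfy.differentiableAt hgy.differentiableAt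
    rw [iteratedDeriv_succ', Filter.EventuallyEq.iteratedDeriv_eq n key,
      ih (deriv f) (deriv g) x hf.deriv1 hg.deriv1, iteratedDeriv_succ', iteratedDeriv_succ']

lemma iteratedDeriv_mul_aa (n : ℕ) : ∀ (f g : ℂ → ℂ) (x : ℂ), AnalyticAt ℂ f x →
    AnalyticAt ℂ g x →
    iteratedDeriv n (fun t => f t * g t) x =
      ∑ k ∈ Finset.range (n + 1),
        (n.choose k : ℂ) * (iteratedDeriv k f x * iteratedDeriv (n - k) g x) := by
  induction n with
  | zero => intro f g x _ _; simp
  | succ n ih =>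
    intro f g x hf hg
    have key : deriv (fun t => f t * g t) =ᶠ[𝓝 x]
        fun t => deriv f t * g t + f t * deriv g t := by
      filter_upwards [hf.eventually_analyticAt, hg.eventually_analyticAt] with y hfy hgy
      exact deriv_mul hfy.differentiableAt hgy.differentiableAt
    rw [iteratedDeriv_succ', Filter.EventuallyEq.iteratedDeriv_eq n key,
      iteratedDeriv_add_aa n (fun t => deriv f t * g t) (fun t => f t * deriv g t) x (hf.deriv1.mul hg) (hf.mul hg.deriv1),
      ih (deriv f) g x hf.deriv1 hg, ih f (deriv g) x hf hg.deriv1,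
      Finset.sum_choose_succ_mul (fun i j => iteratedDeriv i f x * iteratedDeriv j g x) n]
    have e1 : ∀ k ∈ Finset.range (n + 1),
        (n.choose k : ℂ) * (iteratedDeriv k (deriv f) x * iteratedDeriv (n - k) g x)
          = (n.choose k : ℂ) * (iteratedDeriv (k + 1) f x * iteratedDeriv (n - k) g x) := by
      intro k _; rw [← iteratedDeriv_succ']
    have e2 : ∀ k ∈ Finset.range (n + 1),
        (n.choose k : ℂ) * (iteratedDeriv k f x * iteratedDeriv (n - k) (deriv g) x)
          = (n.choose k : ℂ) * (iteratedDeriv k f x * iteratedDeriv (n + 1 - k) g x) := by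
      intro k hk
      rw [← iteratedDeriv_succ', Nat.succ_sub (Finset.mem_range_succ_iff.mp hk)]
    rw [Finset.sum_congr rfl e1, Finset.sum_congr rfl e2, add_comm]

lemma ev_mem {U : Set (ℂ × ℂ)} (hU : IsOpen U) (h0U : (0 : ℂ × ℂ) ∈ U) :
    ∀ᶠ x in 𝓝 (0 : ℂ), ((x, (0 : ℂ)) : ℂ × ℂ) ∈ U := by
  have hc : ContinuousAt (fun x : ℂ => ((x, (0 : ℂ)) : ℂ × ℂ)) 0 :=
    (continuous_id.prodMk continuous_const).continuousAt
  exact hc.preimage_mem_nhds (hU.mem_nhds h0U)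

lemma slice_y_aa {f : ℂ × ℂ → ℂ} {x y : ℂ} (hf : AnalyticAt ℂ f (x, y)) :
    AnalyticAt ℂ (fun t : ℂ => f (x, t)) y := by
  have h2 : AnalyticAt ℂ (fun t : ℂ => ((x, t) : ℂ × ℂ)) y := analyticAt_const.prod analyticAt_id
  exact AnalyticAt.comp (f := fun t : ℂ => ((x, t) : ℂ × ℂ)) hf h2

lemma slice_x_aa {f : ℂ × ℂ → ℂ} {x y : ℂ} (hf : AnalyticAt ℂ f (x, y)) :
    AnalyticAt ℂ (fun t : ℂ => f (t, y)) x := by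
  have h2 : AnalyticAt ℂ (fun t : ℂ => ((t, y) : ℂ × ℂ)) x := analyticAt_id.prod analyticAt_const
  exact AnalyticAt.comp (f := fun t : ℂ => ((t, y) : ℂ × ℂ)) hf h2

/-- The derivative in the second variable, along the x-axis. -/
lemma D1_eq {U : Set (ℂ × ℂ)} {f : ℂ × ℂ → ℂ} (hf : AnalyticOnNhd ℂ f U)
    {x : ℂ} (hx : ((x, (0 : ℂ)) : ℂ × ℂ) ∈ U) :
    deriv (fun y => f (x, y)) 0 = fderiv ℂ f (x, 0) (0, 1) := by
  have hd : HasFDerivAt f (fderiv ℂ f (x, 0)) (x, 0) :=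
    ((hf _ hx).differentiableAt).hasFDerivAt
  have hg : HasDerivAt (fun y : ℂ => ((x, y) : ℂ × ℂ)) ((0 : ℂ), (1 : ℂ)) 0 :=
    (hasDerivAt_const (x := (0 : ℂ)) (c := x)).prodMk (hasDerivAt_id (0 : ℂ))
  exact (hd.comp_hasDerivAt 0 hg).deriv

lemma D1_analytic {U : Set (ℂ × ℂ)} (hU : IsOpen U) (h0U : (0 : ℂ × ℂ) ∈ U)
    {f : ℂ × ℂ → ℂ} (hf : AnalyticOnNhd ℂ f U) :
    AnalyticAt ℂ (fun x => deriv (fun y => f (x, y)) 0) 0 := by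
  have heq : (fun x => fderiv ℂ f (x, 0) (0, 1)) =ᶠ[𝓝 (0 : ℂ)]
      (fun x => deriv (fun y => f (x, y)) 0) := by
    filter_upwards [ev_mem hU h0U] with x hx
    exact (D1_eq hf hx).symm
  have h1 : AnalyticAt ℂ (fderiv ℂ f) ((0 : ℂ), (0 : ℂ)) := (hf 0 h0U).fderiv
  have h2 : AnalyticAt ℂ (fun x : ℂ => ((x, (0 : ℂ)) : ℂ × ℂ)) 0 :=
    analyticAt_id.prod analyticAt_const
  have h3 : AnalyticAt ℂ ((fderiv ℂ f) ∘ fun x : ℂ => ((x, (0 : ℂ)) : ℂ × ℂ)) 0 := AnalyticAt.comp (f := fun x : ℂ => ((x, (0 : ℂ)) : ℂ × ℂ)) h1 h2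
  have h4 : AnalyticAt ℂ (fun x : ℂ => fderiv ℂ f (x, 0) ((0 : ℂ), (1 : ℂ))) 0 :=
    ((ContinuousLinearMap.apply ℂ ℂ ((0 : ℂ), (1 : ℂ))).analyticAt _).comp h3
  exact h4.congr heq

lemma D1_mul {U : Set (ℂ × ℂ)} (hU : IsOpen U) (h0U : (0 : ℂ × ℂ) ∈ U)
    {τ ρ : ℂ × ℂ → ℂ} (hτ : AnalyticOnNhd ℂ τ U) (hρ : AnalyticOnNhd ℂ ρ U) :
    (fun x => deriv (fun y => τ (x, y) * ρ (x, y)) 0) =ᶠ[𝓝 (0 : ℂ)]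
      fun x => deriv (fun y => τ (x, y)) 0 * ρ (x, 0)
        + τ (x, 0) * deriv (fun y => ρ (x, y)) 0 := by
  filter_upwards [ev_mem hU h0U] with x hx
  have h1 : DifferentiableAt ℂ (fun y => τ (x, y)) 0 :=
    (slice_y_aa (hτ _ hx)).differentiableAt
  have h2 : DifferentiableAt ℂ (fun y => ρ (x, y)) 0 :=
    (slice_y_aa (hρ _ hx)).differentiableAt
  exact deriv_mul h1 h2


/-- `pd i j f` is the partial derivative `∂^{i+j} f / ∂x^i ∂y^j` at the origin of `ℂ²`. -/
noncomputable def pd (i j : ℕ) (f : ℂ × ℂ → ℂ) : ℂ :=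
  iteratedDeriv i (fun x => iteratedDeriv j (fun y => f (x, y)) 0) 0

/-- The quantity `𝒜₄` of a function of two complex variables. -/
noncomputable def A4 (g : ℂ × ℂ → ℂ) : ℂ :=
  pd 4 0 g - 3 * (pd 2 1 g) ^ 2 / pd 0 2 g

theorem stmt_5 (U : Set (ℂ × ℂ)) (hU : IsOpen U) (h0U : (0 : ℂ × ℂ) ∈ U)
    (ρ τ : ℂ × ℂ → ℂ) (hρ : AnalyticOnNhd ℂ ρ U) (hτ : AnalyticOnNhd ℂ τ U)
    (h00 : pd 0 0 ρ = 0) (h10 : pd 1 0 ρ = 0) (h01 : pd 0 1 ρ = 0)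
    (h20 : pd 2 0 ρ = 0) (h11 : pd 1 1 ρ = 0) (h02 : pd 0 2 ρ ≠ 0)
    (hA3 : pd 3 0 ρ = 0) (hτ0 : τ 0 ≠ 0) :
    A4 (fun p => τ p * ρ p) = τ 0 * A4 ρ ∧
      (A4 (fun p => τ p * ρ p) = 0 ↔ A4 ρ = 0) := by
  have hz : (((0 : ℂ), (0 : ℂ)) : ℂ × ℂ) = (0 : ℂ × ℂ) := rfl
  have hτa : AnalyticAt ℂ τ (((0 : ℂ), (0 : ℂ)) : ℂ × ℂ) := hτ 0 h0U
  have hρa : AnalyticAt ℂ ρ (((0 : ℂ), (0 : ℂ)) : ℂ × ℂ) := hρ 0 h0U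
  have hτx : AnalyticAt ℂ (fun x : ℂ => τ (x, 0)) 0 := slice_x_aa hτa
  have hρx : AnalyticAt ℂ (fun x : ℂ => ρ (x, 0)) 0 := slice_x_aa hρa
  have hτy : AnalyticAt ℂ (fun y : ℂ => τ (0, y)) 0 := slice_y_aa hτa
  have hρy : AnalyticAt ℂ (fun y : ℂ => ρ (0, y)) 0 := slice_y_aa hρa
  -- values of slice derivatives of ρ
  have hρx0 : ρ ((0 : ℂ), (0 : ℂ)) = 0 := by simpa [pd] using h00
  have hρ0' : ρ 0 = 0 := hρx0
  have hρx1 : iteratedDeriv 1 (fun x : ℂ => ρ (x, 0)) 0 = 0 := by simpa [pd] using h10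
  have hρx2 : iteratedDeriv 2 (fun x : ℂ => ρ (x, 0)) 0 = 0 := by simpa [pd] using h20
  have hρx3 : iteratedDeriv 3 (fun x : ℂ => ρ (x, 0)) 0 = 0 := by simpa [pd] using hA3
  have hρy1 : iteratedDeriv 1 (fun y : ℂ => ρ (0, y)) 0 = 0 := by simpa [pd] using h01
  have hD10 : deriv (fun y : ℂ => ρ (0, y)) 0 = 0 := by
    simpa [pd, iteratedDeriv_one] using h01
  have hD11 : iteratedDeriv 1 (fun x : ℂ => deriv (fun y : ℂ => ρ (x, y)) 0) 0 = 0 := by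
    simpa [pd, iteratedDeriv_one] using h11
  -- normal forms of the pd's of ρ
  have hpd40 : pd 4 0 ρ = iteratedDeriv 4 (fun x : ℂ => ρ (x, 0)) 0 := by simp [pd]
  have hpd02 : pd 0 2 ρ = iteratedDeriv 2 (fun y : ℂ => ρ (0, y)) 0 := by simp [pd]
  have hpd21 : pd 2 1 ρ = iteratedDeriv 2 (fun x : ℂ => deriv (fun y : ℂ => ρ (x, y)) 0) 0 := by
    simp [pd, iteratedDeriv_one]
  -- F1 : the (4,0) derivative of the product
  have F1 : pd 4 0 (fun p => τ p * ρ p) = τ 0 * pd 4 0 ρ := by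
    have e : pd 4 0 (fun p => τ p * ρ p)
        = iteratedDeriv 4 (fun x : ℂ => τ (x, 0) * ρ (x, 0)) 0 := by simp [pd]
    rw [e, iteratedDeriv_mul_aa 4 _ _ 0 hτx hρx, hpd40]
    simp [Finset.sum_range_succ, hρx0, hρx1, hρx2, hρx3, hρ0', hz]
  -- F2 : the (0,2) derivative of the product
  have F2 : pd 0 2 (fun p => τ p * ρ p) = τ 0 * pd 0 2 ρ := by
    have e : pd 0 2 (fun p => τ p * ρ p)
        = iteratedDeriv 2 (fun y : ℂ => τ (0, y) * ρ (0, y)) 0 := by simp [pd]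
    rw [e, iteratedDeriv_mul_aa 2 _ _ 0 hτy hρy, hpd02]
    simp [Finset.sum_range_succ, hρx0, hρy1, hρ0', hz]
  -- F3 : the (2,1) derivative of the product
  have F3 : pd 2 1 (fun p => τ p * ρ p) = τ 0 * pd 2 1 ρ := by
    have e : pd 2 1 (fun p => τ p * ρ p)
        = iteratedDeriv 2 (fun x : ℂ => deriv (fun y : ℂ => τ (x, y) * ρ (x, y)) 0) 0 := by
      simp [pd, iteratedDeriv_one]
    have hDτ : AnalyticAt ℂ (fun x : ℂ => deriv (fun y : ℂ => τ (x, y)) 0) 0 :=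
      D1_analytic hU h0U hτ
    have hDρ : AnalyticAt ℂ (fun x : ℂ => deriv (fun y : ℂ => ρ (x, y)) 0) 0 :=
      D1_analytic hU h0U hρ
    have hadd : iteratedDeriv 2 (fun x : ℂ => deriv (fun y : ℂ => τ (x, y)) 0 * ρ (x, 0)
          + τ (x, 0) * deriv (fun y : ℂ => ρ (x, y)) 0) 0
        = iteratedDeriv 2 (fun x : ℂ => deriv (fun y : ℂ => τ (x, y)) 0 * ρ (x, 0)) 0
          + iteratedDeriv 2 (fun x : ℂ => τ (x, 0) * deriv (fun y : ℂ => ρ (x, y)) 0) 0 :=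
      iteratedDeriv_add_aa 2 _ _ 0 (hDτ.mul hρx) (hτx.mul hDρ)
    have hm1 : iteratedDeriv 2 (fun x : ℂ => deriv (fun y : ℂ => τ (x, y)) 0 * ρ (x, 0)) 0
        = ∑ k ∈ Finset.range 3, ((2 : ℕ).choose k : ℂ) *
            (iteratedDeriv k (fun x : ℂ => deriv (fun y : ℂ => τ (x, y)) 0) 0 *
             iteratedDeriv (2 - k) (fun x : ℂ => ρ (x, 0)) 0) :=
      iteratedDeriv_mul_aa 2 _ _ 0 hDτ hρx
    have hm2 : iteratedDeriv 2 (fun x : ℂ => τ (x, 0) * deriv (fun y : ℂ => ρ (x, y)) 0) 0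
        = ∑ k ∈ Finset.range 3, ((2 : ℕ).choose k : ℂ) *
            (iteratedDeriv k (fun x : ℂ => τ (x, 0)) 0 *
             iteratedDeriv (2 - k) (fun x : ℂ => deriv (fun y : ℂ => ρ (x, y)) 0) 0) :=
      iteratedDeriv_mul_aa 2 _ _ 0 hτx hDρ
    rw [e, Filter.EventuallyEq.iteratedDeriv_eq 2 (D1_mul hU h0U hτ hρ), hadd, hm1, hm2, hpd21]
    simp [Finset.sum_range_succ, hρx0, hρx1, hρx2, hD10, hD11, hρ0', hz]
  have main : A4 (fun p => τ p * ρ p) = τ 0 * A4 ρ := by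
    rw [A4, A4, F1, F2, F3]
    field_simp
  exact ⟨main, by rw [main, mul_eq_zero]; simp [hτ0]⟩
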